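/- Every Weyl-invariant quadratic form Q on the cocharacter lattice Y of a root datum possesses a fair bisector, i.e., a bisector C such that C(α^∨, y) = C(y, α^∨) = 0 for all y ∈ Y whenever α^∨ is a simple coroot with Q(α^∨) even. -/

import Mathlib

/-- Every Weyl-invariant quadratic form `Q` on the cocharacter lattice `Y` of a root
datum possesses a fair bisector: a bilinear `C : Y × Y → ℤ/2ℤ` with `C(y,y) ≡ Q(y)`
mod `2`, vanishing in both variables on each simple coroot `α∨` with `Q(α∨)` even. -/
theorem exists_fair_bisector
    {Y X I : Type*} [AddCommGroup Y] [AddCommGroup X]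
    [Module.Free ℤ Y] [Module.Finite ℤ Y] [Finite I]
    (pair : Y →+ X →+ ℤ)
    (αv : I → Y) (α : I → X)
    (hpair : ∀ i : I, pair (αv i) (α i) = 2)
    (Q : Y → ℤ) (B : Y → Y → ℤ)
    (hBdef : ∀ y₁ y₂ : Y, B y₁ y₂ = Q (y₁ + y₂) - Q y₁ - Q y₂)
    (hQsmul : ∀ (n : ℤ) (y : Y), Q (n • y) = n ^ 2 * Q y)
    (hBadd : ∀ y₁ y₂ y₃ : Y, B (y₁ + y₂) y₃ = B y₁ y₃ + B y₂ y₃)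
    (hWeyl : ∀ (i : I) (y : Y), Q (y - pair y (α i) • αv i) = Q y) :
    ∃ C : Y → Y → ZMod 2,
      (∀ y₁ y₂ y₃ : Y, C (y₁ + y₂) y₃ = C y₁ y₃ + C y₂ y₃) ∧
      (∀ y₁ y₂ y₃ : Y, C y₁ (y₂ + y₃) = C y₁ y₂ + C y₁ y₃) ∧
      (∀ y : Y, C y y = (Q y : ZMod 2)) ∧
      (∀ i : I, (2 : ℤ) ∣ Q (αv i) →
        ∀ y : Y, C (αv i) y = 0 ∧ C y (αv i) = 0) := by
  classical
  -- Basic facts about Q and B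
  have hQ0 : Q 0 = 0 := by simpa using hQsmul 0 0
  have hBsymm : ∀ y z : Y, B y z = B z y := fun y z => by
    rw [hBdef, hBdef, add_comm]; ring
  have hBsmul : ∀ (n : ℤ) (z y : Y), B (n • z) y = n * B z y := by
    intro n z y
    have := map_zsmul (AddMonoidHom.mk' (fun t => B t y) (fun a b => hBadd a b y)) n z
    simpa [smul_eq_mul] using this
  have hBsmul' : ∀ (n : ℤ) (y z : Y), B y (n • z) = n * B y z := by
    intro n y z; rw [hBsymm, hBsmul, hBsymm]
  have hQadd : ∀ y z : Y, Q (y + z) = Q y + Q z + B y z := fun y z => by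
    rw [hBdef]; ring
  -- The key coroot identity: B(y, α∨) = ⟨y, α⟩ * Q(α∨)
  have hBcoroot : ∀ (i : I) (y : Y), B y (αv i) = pair y (α i) * Q (αv i) := by
    intro i y
    have key : ∀ z : Y,
        (pair z (α i) : ℤ) * B z (αv i) = (pair z (α i) : ℤ) ^ 2 * Q (αv i) := by
      intro z
      have h1 := hWeyl i z
      have h2 : Q (z - (pair z (α i) : ℤ) • αv i)
          = Q z + Q ((-(pair z (α i) : ℤ)) • αv i) + B z ((-(pair z (α i) : ℤ)) • αv i) := by
        rw [sub_eq_add_neg, ← neg_smul, hQadd]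
      rw [h1, hQsmul, hBsmul'] at h2
      linear_combination h2
    have e1 := key y
    have e2 := key (y + αv i)
    have hpa : (pair (y + αv i) (α i) : ℤ) = pair y (α i) + 2 := by
      rw [map_add]; simp [hpair i]
    have hBaa : B (αv i) (αv i) = 2 * Q (αv i) := by
      have h2a : Q (αv i + αv i) = Q ((2 : ℤ) • αv i) := by rw [two_smul]
      rw [hBdef, h2a, hQsmul]; ring
    rw [hpa, hBadd, hBaa] at e2
    have h2 : 2 * B y (αv i) = 2 * ((pair y) (α i) * Q (αv i)) := by linear_combination e2 - e1
    exact mul_left_cancel₀ two_ne_zero h2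
  -- Coordinates mod 2
  let ι := Module.Free.ChooseBasisIndex ℤ Y
  let e : Module.Basis ι ℤ Y := Module.Free.chooseBasis ℤ Y
  set V := ι → ZMod 2 with hV
  let c : Y → V := fun y j => ((e.repr y j : ℤ) : ZMod 2)
  have hcadd : ∀ y z : Y, c (y + z) = c y + c z := by
    intro y z; funext j
    show ((e.repr (y + z) j : ℤ) : ZMod 2) = ((e.repr y j : ℤ) : ZMod 2) + ((e.repr z j : ℤ) : ZMod 2)
    rw [map_add, Finsupp.add_apply, Int.cast_add]
  let lift : V → Y := fun v => ∑ j, (ZMod.cast (v j) : ℤ) • e j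
  have hclift : ∀ v : V, c (lift v) = v := by
    intro v; funext j
    have := congrFun (e.repr_sum_self (fun j => (ZMod.cast (v j) : ℤ))) j
    simp only [c, lift]
    rw [show (e.repr (∑ j, (ZMod.cast (v j) : ℤ) • e j)) j
          = (ZMod.cast (v j) : ℤ) from this]
    exact ZMod.intCast_zmod_cast (v j)
  have hliftc : ∀ y : Y, ∃ z : Y, lift (c y) = y + (2 : ℤ) • z := by
    intro y
    have hdvd : ∀ j : ι, ∃ k : ℤ, (ZMod.cast (c y j) : ℤ) = e.repr y j + 2 * k := by
      intro j
      have h2 : (((ZMod.cast (c y j) : ℤ) - e.repr y j : ℤ) : ZMod 2) = 0 := by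
        rw [Int.cast_sub, ZMod.intCast_zmod_cast]
        exact sub_eq_zero_of_eq rfl
      obtain ⟨k, hk⟩ := (ZMod.intCast_zmod_eq_zero_iff_dvd _ 2).1 h2
      exact ⟨k, by push_cast at hk; linarith⟩
    choose k hk using hdvd
    refine ⟨∑ j, k j • e j, ?_⟩
    calc lift (c y) = ∑ j, (e.repr y j + 2 * k j) • e j := by
          simp only [lift]
          exact Finset.sum_congr rfl fun j _ => by rw [hk j]
      _ = (∑ j, e.repr y j • e j) + (2 : ℤ) • ∑ j, k j • e j := by
          rw [Finset.smul_sum, ← Finset.sum_add_distrib]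
          exact Finset.sum_congr rfl fun j _ => by rw [add_smul, smul_smul]
      _ = y + (2 : ℤ) • ∑ j, k j • e j := by rw [e.sum_repr]
  have h2z : (2 : ZMod 2) = 0 := by decide
  -- mod 2 invariance of Q and B under translation by 2•z
  have hQ2 : ∀ y z : Y, ((Q (y + (2 : ℤ) • z) : ℤ) : ZMod 2) = (Q y : ZMod 2) := by
    intro y z
    have : Q (y + (2 : ℤ) • z) = Q y + 2 * (2 * Q z + B y z) := by
      rw [hQadd, hQsmul, hBsmul']; ring
    rw [this]; push_cast; rw [h2z]; ring
  have hB2l : ∀ y z w : Y, ((B (y + (2 : ℤ) • z) w : ℤ) : ZMod 2) = (B y w : ZMod 2) := by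
    intro y z w
    have : B (y + (2 : ℤ) • z) w = B y w + 2 * B z w := by rw [hBadd, hBsmul]
    rw [this]; push_cast; rw [h2z]; ring
  -- the quadratic function and bilinear form on V
  let q : V → ZMod 2 := fun v => ((Q (lift v) : ℤ) : ZMod 2)
  have hqc : ∀ y : Y, q (c y) = (Q y : ZMod 2) := by
    intro y
    obtain ⟨z, hz⟩ := hliftc y
    simp only [q]; rw [hz, hQ2]
  have hliftadd : ∀ v u : V, ∃ z : Y, lift (v + u) = (lift v + lift u) + (2 : ℤ) • z := by
    intro v u
    obtain ⟨z, hz⟩ := hliftc (lift v + lift u)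
    refine ⟨z, ?_⟩
    rw [← hz]
    congr 1
    rw [hcadd, hclift, hclift]
  have hlift0 : lift 0 = 0 := by
    simp only [lift]
    refine Finset.sum_eq_zero fun j _ => ?_
    rw [Pi.zero_apply, ZMod.cast_zero, zero_smul]
  have hzmod : ∀ a : ZMod 2, a = 0 ∨ a = 1 := by decide
  let bfun : V → V → ZMod 2 := fun v u => ((B (lift v) (lift u) : ℤ) : ZMod 2)
  have hbfunsymm : ∀ v u, bfun v u = bfun u v := by
    intro v u; simp only [bfun]; rw [hBsymm]
  have hB0 : ∀ y : Y, B 0 y = 0 := fun y => by rw [hBdef]; simp [hQ0]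
  have hbadd1 : ∀ v u w : V, bfun (v + u) w = bfun v w + bfun u w := by
    intro v u w
    obtain ⟨z, hz⟩ := hliftadd v u
    simp only [bfun]
    rw [hz, hB2l, hBadd]
    push_cast; ring
  have hbsmul1 : ∀ (a : ZMod 2) (v u : V), bfun (a • v) u = a * bfun v u := by
    intro a v u
    rcases hzmod a with rfl | rfl
    · rw [zero_smul, zero_mul]
      simp only [bfun]
      rw [hlift0, hB0]
      norm_num
    · rw [one_smul, one_mul]
  have hbadd2 : ∀ (v u w : V), bfun v (u + w) = bfun v u + bfun v w := by
    intro v u w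
    rw [hbfunsymm, hbadd1, hbfunsymm u, hbfunsymm w]
  have hbsmul2 : ∀ (a : ZMod 2) (v u : V), bfun v (a • u) = a * bfun v u := by
    intro a v u
    rw [hbfunsymm, hbsmul1, hbfunsymm]
  let b : V →ₗ[ZMod 2] V →ₗ[ZMod 2] ZMod 2 :=
    LinearMap.mk₂ (ZMod 2) bfun hbadd1 hbsmul1 hbadd2 hbsmul2
  have hbapply : ∀ v u : V, b v u = bfun v u := fun v u => rfl
  have hqcomp : ∀ v u : V, q (v + u) = q v + q u + b v u := by
    intro v u
    obtain ⟨z, hz⟩ := hliftadd v u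
    simp only [q, hbapply, bfun]
    rw [hz, hQ2, hQadd]
    push_cast; ring
  have hq0 : q 0 = 0 := by simp only [q]; rw [hlift0, hQ0]; norm_num
  -- package q as a quadratic map
  let Qm : QuadraticMap (ZMod 2) V (ZMod 2) :=
    { toFun := q
      toFun_smul := by
        intro a v
        rcases hzmod a with rfl | rfl
        · rw [zero_smul]
          simpa using hq0
        · rw [one_smul]; simp
      exists_companion' := ⟨b, hqcomp⟩ }
  -- the subspace spanned by the even coroots
  let W : Submodule (ZMod 2) V :=
    Submodule.span (ZMod 2) {v | ∃ i : I, (2 : ℤ) ∣ Q (αv i) ∧ v = c (αv i)}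
  have hgen : ∀ (i : I), (2 : ℤ) ∣ Q (αv i) → ∀ u : V, b (c (αv i)) u = 0 := by
    intro i hi u
    rw [hbapply]
    simp only [bfun]
    obtain ⟨z, hz⟩ := hliftc (αv i)
    rw [show lift (c (αv i)) = αv i + (2:ℤ) • z from hz, hB2l, hBsymm, hBcoroot]
    push_cast
    obtain ⟨m, hm⟩ := hi
    rw [hm]; push_cast; rw [h2z]; ring
  have hWker : ∀ w ∈ W, ∀ u : V, b w u = 0 := by
    intro w hw
    have : W ≤ LinearMap.ker b := by
      rw [Submodule.span_le]
      rintro v ⟨i, hi, rfl⟩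
      simp only [SetLike.mem_coe, LinearMap.mem_ker]
      apply LinearMap.ext
      intro u
      rw [hgen i hi u]
      rfl
    intro u
    have hb0 : b w = 0 := LinearMap.mem_ker.1 (this hw)
    rw [hb0]
    rfl
  have hqW : ∀ w ∈ W, q w = 0 := by
    intro w hw
    induction hw using Submodule.span_induction with
    | mem v hv =>
        obtain ⟨i, hi, rfl⟩ := hv
        rw [hqc]
        exact_mod_cast (ZMod.intCast_zmod_eq_zero_iff_dvd _ 2).2 (by exact_mod_cast hi)
    | zero => exact hq0
    | add x y hx hy ihx ihy =>
        rw [hqcomp, ihx, ihy, hWker x hx y]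
        ring
    | smul a x hx ih =>
        rcases hzmod a with rfl | rfl
        · rw [zero_smul]; exact hq0
        · rwa [one_smul]
  -- complement and projection
  obtain ⟨U, hU⟩ := Submodule.exists_isCompl W
  let π : V →ₗ[ZMod 2] V := U.subtype.comp (U.projectionOnto W hU.symm)
  have hπW : ∀ w ∈ W, π w = 0 := by
    intro w hw
    simp only [π, LinearMap.comp_apply]
    rw [Submodule.projectionOnto_apply_of_mem_right hU.symm hw]
    rfl
  have hsub : ∀ v : V, v = (W.projectionOnto U hU v : V) + π v := by
    intro v
    exact (Submodule.projection_add_projection_eq_self hU v).symm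
  have hqπ : ∀ v : V, q (π v) = q v := by
    intro v
    conv_rhs => rw [hsub v]
    rw [hqcomp, hqW _ (Submodule.coe_mem _), hWker _ (Submodule.coe_mem _)]
    ring
  -- a bilinear form realizing q
  obtain ⟨G, hG⟩ := LinearMap.BilinMap.toQuadraticMap_surjective (R := ZMod 2) (M := V) Qm
  have hGdiag : ∀ v : V, G v v = q v := by
    intro v
    have := DFunLike.congr_fun hG v
    rwa [LinearMap.BilinMap.toQuadraticMap_apply] at this
  -- assemble the fair bisector
  refine ⟨fun y z => G (π (c y)) (π (c z)), ?_, ?_, ?_, ?_⟩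
  · intro y₁ y₂ y₃
    show G (π (c (y₁ + y₂))) (π (c y₃)) = G (π (c y₁)) (π (c y₃)) + G (π (c y₂)) (π (c y₃))
    rw [hcadd, map_add, map_add, LinearMap.add_apply]
  · intro y₁ y₂ y₃
    show G (π (c y₁)) (π (c (y₂ + y₃))) = G (π (c y₁)) (π (c y₂)) + G (π (c y₁)) (π (c y₃))
    rw [hcadd, map_add, map_add]
  · intro y
    show G (π (c y)) (π (c y)) = (Q y : ZMod 2)
    rw [hGdiag, hqπ, hqc]
  · intro i hi y
    have hcW : c (αv i) ∈ W := Submodule.subset_span ⟨i, hi, rfl⟩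
    have h0 : π (c (αv i)) = 0 := hπW _ hcW
    constructor
    · show G (π (c (αv i))) (π (c y)) = 0
      rw [h0, map_zero, LinearMap.zero_apply]
    · show G (π (c y)) (π (c (αv i))) = 0
      rw [h0, map_zero]
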